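/- If $h : G \to H$ is a continuous injective group homomorphism of topological groups and $H$ is 2-swelling, then $G$ is 2-swelling. -/

import Mathlib

open Pointwise

def IsTwoSwelling (K : Type*) [Group K] [TopologicalSpace K] : Prop :=
  ∀ (A B : Set K), IsCompact A → IsCompact B → ∀ a b c : K,
    a • A ∪ b • B ⊆ A ∪ B → a • A ∩ b • B ⊆ c • (A ∩ B) →
      a • A ∪ b • B = A ∪ B ∧ a • A ∩ b • B = c • (A ∩ B)

private lemma image_smul' {G H : Type*} [Group G] [Group H] (h : G →* H) (a : G) (A : Set G) :
    h '' (a • A) = h a • (h '' A) := by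
  ext x
  simp only [Set.mem_image, Set.mem_smul_set]
  constructor
  · rintro ⟨y, ⟨z, hz, rfl⟩, rfl⟩
    exact ⟨h z, ⟨z, hz, rfl⟩, by simp [smul_eq_mul]⟩
  · rintro ⟨y, ⟨z, hz, rfl⟩, rfl⟩
    exact ⟨a • z, ⟨z, hz, rfl⟩, by simp [smul_eq_mul]⟩

theorem stmt_10 {G H : Type*} [Group G] [TopologicalSpace G] [IsTopologicalGroup G]
    [Group H] [TopologicalSpace H] [IsTopologicalGroup H]
    (h : G →* H) (hc : Continuous h) (hi : Function.Injective h)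
    (hH : IsTwoSwelling H) : IsTwoSwelling G := by
  intro A B hA hB a b c h1 h2
  have key := hH (h '' A) (h '' B) (hA.image hc) (hB.image hc) (h a) (h b) (h c)
  rw [← image_smul' h a A, ← image_smul' h b B,
    ← Set.image_union, ← Set.image_inter hi, ← Set.image_inter hi,
    ← image_smul' h c (A ∩ B), ← Set.image_union] at key
  have := key (Set.image_mono (f := h) h1) (Set.image_mono (f := h) h2)
  exact ⟨hi.image_injective this.1, hi.image_injective this.2⟩
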